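/- If G is a graph with maximum degree at most Δ that does not contain the complete graph K_{Δ+1} as a subgraph, and Δ ≥ 3, then G is Δ-colorable (Brooks' theorem, clique-free case). -/

import Mathlib

namespace BrooksAux
open SimpleGraph

variable {V : Type*} (G : SimpleGraph V)

/-- `n`-step reachability inside a vertex set `s`. -/
def RInN (s : Set V) : ℕ → V → V → Prop
  | 0, u, v => u = v ∧ u ∈ s
  | (n+1), u, v => ∃ w, G.Adj u w ∧ u ∈ s ∧ w ∈ s ∧ RInN s n w v

/-- Reachability inside a vertex set `s`. -/
def RIn (s : Set V) (u v : V) : Prop := ∃ n, RInN G s n u v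

variable {G}

lemma RInN.mem_left {s : Set V} {n u v} (h : RInN G s n u v) : u ∈ s := by
  cases n with
  | zero => exact h.2
  | succ n => obtain ⟨w, _, hu, _, _⟩ := h; exact hu

lemma RInN.mem_right {s : Set V} {n u v} (h : RInN G s n u v) : v ∈ s := by
  induction n generalizing u with
  | zero => exact h.1 ▸ h.2
  | succ n ih => obtain ⟨w, _, _, _, hw⟩ := h; exact ih hw

lemma RIn.mem_left {s : Set V} {u v} (h : RIn G s u v) : u ∈ s := h.choose_spec.mem_left
lemma RIn.mem_right {s : Set V} {u v} (h : RIn G s u v) : v ∈ s := h.choose_spec.mem_right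

lemma RIn.refl {s : Set V} {u} (hu : u ∈ s) : RIn G s u u := ⟨0, rfl, hu⟩

lemma RIn.step {s : Set V} {u w} (h : G.Adj u w) (hu : u ∈ s) (hw : w ∈ s) :
    RIn G s u w := ⟨1, w, h, hu, hw, rfl, hw⟩

lemma RInN.comp {s : Set V} {m n u v w} (h : RInN G s m u v) (h' : RInN G s n v w) :
    RInN G s (m + n) u w := by
  induction m generalizing u with
  | zero => rw [Nat.zero_add]; exact h.1 ▸ h'
  | succ m ih =>
    rw [Nat.succ_add]
    obtain ⟨x, hadj, hu, hx, hrest⟩ := h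
    exact ⟨x, hadj, hu, hx, ih hrest⟩

lemma RIn.trans {s : Set V} {u v w} (h : RIn G s u v) (h' : RIn G s v w) : RIn G s u w := by
  obtain ⟨m, hm⟩ := h; obtain ⟨n, hn⟩ := h'; exact ⟨m + n, hm.comp hn⟩

lemma RIn.symm {s : Set V} {u v} (h : RIn G s u v) : RIn G s v u := by
  obtain ⟨n, hn⟩ := h
  induction n generalizing u with
  | zero => exact ⟨0, hn.1 ▸ rfl, hn.1 ▸ hn.2⟩
  | succ n ih =>
    obtain ⟨w, hadj, hu, hw, hrest⟩ := hn
    exact (ih hrest).trans (RIn.step hadj.symm hw hu)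

lemma RInN.mono {s t : Set V} (hst : s ⊆ t) {n u v} (h : RInN G s n u v) :
    RInN G t n u v := by
  induction n generalizing u with
  | zero => exact ⟨h.1, hst h.2⟩
  | succ n ih =>
    obtain ⟨w, hadj, hu, hw, hrest⟩ := h
    exact ⟨w, hadj, hst hu, hst hw, ih hrest⟩

lemma RIn.mono {s t : Set V} (hst : s ⊆ t) {u v} (h : RIn G s u v) : RIn G t u v := by
  obtain ⟨n, hn⟩ := h; exact ⟨n, hn.mono hst⟩

variable (G) in
/-- `s` is connected (as a vertex set of `G`). -/
def ConnOn (s : Set V) : Prop := ∀ u ∈ s, ∀ v ∈ s, RIn G s u v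

variable (G) in
/-- The connected component of `v` inside the vertex set `s`. -/
def CompOf (s : Set V) (v : V) : Set V := {u | RIn G s v u}

lemma CompOf.self_mem {s : Set V} {v} (hv : v ∈ s) : v ∈ CompOf G s v := RIn.refl hv

lemma CompOf.subset {s : Set V} {v} : CompOf G s v ⊆ s := fun _ h => h.mem_right

lemma CompOf.adj_closed {s : Set V} {v u w} (hu : u ∈ CompOf G s v) (h : G.Adj u w)
    (hw : w ∈ s) : w ∈ CompOf G s v :=
  RIn.trans hu (RIn.step h hu.mem_right hw)

lemma CompOf.eq_of_mem {s : Set V} {v u} (hu : u ∈ CompOf G s v) :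
    CompOf G s u = CompOf G s v := by
  ext w
  exact ⟨fun hw => RIn.trans hu hw, fun hw => RIn.trans (RIn.symm hu) hw⟩

/-- A walk within `s` starting in a component of `s` stays in that component. -/
lemma RInN.stay_in_comp {s : Set V} {v n u w} (h : RInN G s n u w)
    (hu : u ∈ CompOf G s v) : RInN G (CompOf G s v) n u w := by
  induction n generalizing u with
  | zero => exact ⟨h.1, hu⟩
  | succ n ih =>
    obtain ⟨x, hadj, hus, hx, hrest⟩ := h
    exact ⟨x, hadj, hu, CompOf.adj_closed hu hadj hx, ih hrest (CompOf.adj_closed hu hadj hx)⟩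

lemma CompOf.connOn {s : Set V} {v} : ConnOn G (CompOf G s v) := by
  intro u hu w hw
  obtain ⟨n, hn⟩ := RIn.trans (RIn.symm hu) hw
  exact ⟨n, hn.stay_in_comp hu⟩

/-- Distance to `v` within `s`. -/
noncomputable def dIn (s : Set V) (v u : V) : ℕ := sInf {n | RInN G s n u v}

lemma dIn_self {s : Set V} {v} (hv : v ∈ s) : dIn (G := G) s v v = 0 :=
  Nat.eq_zero_of_le_zero (Nat.sInf_le ⟨rfl, hv⟩)

lemma dIn_spec {s : Set V} {v u} (h : RIn G s u v) :
    RInN G s (dIn (G := G) s v u) u v :=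
  Nat.sInf_mem (h : ∃ n, RInN G s n u v)

/-- From any vertex reachable from `v` (other than `v`), there is a neighbour
strictly closer to `v`. -/
lemma exists_adj_dIn_lt {s : Set V} {v u} (h : RIn G s u v) (hne : u ≠ v) :
    ∃ w ∈ s, G.Adj u w ∧ dIn (G := G) s v w < dIn (G := G) s v u := by
  have hspec := dIn_spec h
  cases hd : dIn (G := G) s v u with
  | zero => rw [hd] at hspec; exact absurd hspec.1 hne
  | succ n =>
    rw [hd] at hspec
    obtain ⟨w, hadj, hu, hw, hrest⟩ := hspec
    refine ⟨w, hw, hadj, ?_⟩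
    have : dIn (G := G) s v w ≤ n := Nat.sInf_le hrest
    omega

lemma dIn_pos {s : Set V} {v u} (hne : u ≠ v) (h : RIn G s u v) :
    0 < dIn (G := G) s v u := by
  rcases Nat.eq_zero_or_pos (dIn (G := G) s v u) with h' | h'
  · exact absurd ((h' ▸ dIn_spec h).1) hne
  · exact h'


/-- Minimal excludant of a finite set of naturals. -/
noncomputable def mex (t : Finset ℕ) : ℕ := sInf {n | n ∉ t}

lemma mex_not_mem (t : Finset ℕ) : mex t ∉ t := by
  have h : {n | n ∉ t}.Nonempty := by
    refine ⟨t.sup id + 1, fun hmem => ?_⟩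
    have := Finset.le_sup (f := id) hmem
    simp only [id] at this
    omega
  exact Nat.sInf_mem h

lemma mex_le_card (t : Finset ℕ) : mex t ≤ t.card := by
  by_contra h
  push_neg at h
  have hsub : Finset.range (t.card + 1) ⊆ t := by
    intro k hk
    rw [Finset.mem_range] at hk
    by_contra hkt
    have : mex t ≤ k := Nat.sInf_le hkt
    omega
  have := Finset.card_le_card hsub
  simp at this

variable {V : Type*} [Fintype V] [DecidableEq V] {G : SimpleGraph V} [DecidableRel G.Adj]

/-- Greedy coloring of the vertices of `s` in order of increasing `pos`. -/
noncomputable def greedy (G : SimpleGraph V) [DecidableRel G.Adj] (pos : V → ℕ) (s : Finset V) (v : V) : ℕ :=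
  mex (((s.filter (fun u => G.Adj v u ∧ pos u < pos v)).attach).image
    (fun u => greedy G pos s u.1))
termination_by pos v
decreasing_by
  · have := u.2; simp only [Finset.mem_filter] at this; exact this.2.2

lemma greedy_eq (pos : V → ℕ) (s : Finset V) (v : V) :
    greedy G pos s v =
      mex ((s.filter (fun u => G.Adj v u ∧ pos u < pos v)).image (greedy G pos s)) := by
  rw [greedy]
  congr 1
  ext c
  simp only [Finset.mem_image, Finset.mem_attach, true_and, Subtype.exists]
  constructor
  · rintro ⟨a, ha, rfl⟩; exact ⟨a, ha, rfl⟩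
  · rintro ⟨a, ha, rfl⟩; exact ⟨a, ha, rfl⟩

lemma greedy_not_mem_earlier (pos : V → ℕ) (s : Finset V) (v : V) :
    greedy G pos s v ∉
      (s.filter (fun u => G.Adj v u ∧ pos u < pos v)).image (greedy G pos s) := by
  rw [greedy_eq]; exact mex_not_mem _

/-- Greedy colorings are proper, provided `pos` separates adjacent vertices of `s`. -/
lemma greedy_proper (pos : V → ℕ) (s : Finset V)
    (hpos : ∀ u ∈ s, ∀ w ∈ s, G.Adj u w → pos u ≠ pos w)
    {u w : V} (hu : u ∈ s) (hw : w ∈ s) (hadj : G.Adj u w) :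
    greedy G pos s u ≠ greedy G pos s w := by
  classical
  rcases lt_or_gt_of_ne (hpos u hu w hw hadj) with h | h
  · intro heq
    exact greedy_not_mem_earlier pos s w
      (Finset.mem_image.mpr ⟨u, Finset.mem_filter.mpr ⟨hu, hadj.symm, h⟩, heq⟩)
  · intro heq
    exact greedy_not_mem_earlier pos s u
      (Finset.mem_image.mpr ⟨w, Finset.mem_filter.mpr ⟨hw, hadj, h⟩, heq.symm⟩)

lemma greedy_le_card_image (pos : V → ℕ) (s : Finset V) (v : V) :
    greedy G pos s v ≤
      ((s.filter (fun u => G.Adj v u ∧ pos u < pos v)).image (greedy G pos s)).card := by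
  rw [greedy_eq]; exact mex_le_card _

lemma greedy_le_card (pos : V → ℕ) (s : Finset V) (v : V) :
    greedy G pos s v ≤ (s.filter (fun u => G.Adj v u ∧ pos u < pos v)).card :=
  (greedy_le_card_image pos s v).trans (Finset.card_image_le)

/-- Position function from a key: refines `key` into an injective function. -/
noncomputable def posOf (key : V → ℕ) : V → ℕ :=
  fun v => key v * (Fintype.card V) + (Fintype.equivFin V v)

lemma posOf_lt_of_key_lt {key : V → ℕ} {u w : V} (h : key u < key w) :
    posOf key u < posOf key w := by
  unfold posOf
  have h1 : ((Fintype.equivFin V) u : ℕ) < Fintype.card V := (Fintype.equivFin V u).2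
  nlinarith [Nat.succ_le_of_lt h]

lemma posOf_injective (key : V → ℕ) : Function.Injective (posOf key) := by
  intro u w h
  rcases lt_trichotomy (key u) (key w) with hk | hk | hk
  · exact absurd h (posOf_lt_of_key_lt hk).ne
  · unfold posOf at h
    rw [hk] at h
    have := Nat.add_left_cancel h
    exact (Fintype.equivFin V).injective (Fin.val_injective this)
  · exact absurd h.symm (posOf_lt_of_key_lt hk).ne

lemma key_le_of_posOf_le {key : V → ℕ} {u w : V} (h : posOf key u ≤ posOf key w) :
    key u ≤ key w := by
  by_contra hk
  exact absurd (posOf_lt_of_key_lt (not_le.mp hk)) (not_lt.mpr h)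

lemma mex_empty : mex (∅ : Finset ℕ) = 0 :=
  Nat.eq_zero_of_le_zero (Nat.sInf_le (by simp))

/-- Coloring lemma, pendant case: a connected set with a vertex of degree `< Δ`
is `Δ`-colorable. -/
lemma exists_coloring_pendant (s : Finset V) {Δ : ℕ} {v : V} (hv : v ∈ s)
    (hconn : ConnOn G ↑s)
    (hdeg : ∀ u ∈ s, (s.filter (fun w => G.Adj u w)).card ≤ Δ)
    (hvdeg : (s.filter (fun w => G.Adj v w)).card < Δ) :
    ∃ C : V → ℕ, (∀ u ∈ s, ∀ w ∈ s, G.Adj u w → C u ≠ C w) ∧ ∀ u ∈ s, C u < Δ := by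
  classical
  set d : V → ℕ := dIn (G := G) ↑s v with hd
  set B : ℕ := s.sup d with hB
  set key : V → ℕ := fun u => B - d u with hkey
  set pos : V → ℕ := posOf key with hpos
  refine ⟨greedy G pos s, ?_, ?_⟩
  · intro u hu w hw hadj
    exact greedy_proper pos s
      (fun x _ y _ hxy => fun h => (G.ne_of_adj hxy) (posOf_injective key h)) hu hw hadj
  · intro u hu
    by_cases huv : u = v
    · subst huv
      calc greedy G pos s u ≤ (s.filter (fun w => G.Adj u w ∧ pos w < pos u)).card :=
            greedy_le_card pos s u
        _ ≤ (s.filter (fun w => G.Adj u w)).card := Finset.card_le_card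
            (by intro x hx; rw [Finset.mem_filter] at hx ⊢; exact ⟨hx.1, hx.2.1⟩)
        _ < Δ := hvdeg
    · obtain ⟨w, hws, hadj, hdlt⟩ := exists_adj_dIn_lt (hconn u hu v hv) huv
      rw [← hd] at hdlt
      have hwkey : key u < key w := by
        have hub : d u ≤ B := Finset.le_sup hu
        simp only [hkey]
        omega
      have hwpos : pos u < pos w := posOf_lt_of_key_lt hwkey
      have hwmem : w ∈ s.filter (fun x => G.Adj u x) := Finset.mem_filter.mpr ⟨hws, hadj⟩
      have hsub : s.filter (fun x => G.Adj u x ∧ pos x < pos u) ⊆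
          (s.filter (fun x => G.Adj u x)).erase w := by
        intro x hx
        rw [Finset.mem_filter] at hx
        refine Finset.mem_erase.mpr ⟨?_, Finset.mem_filter.mpr ⟨hx.1, hx.2.1⟩⟩
        rintro rfl
        omega
      calc greedy G pos s u ≤ (s.filter (fun x => G.Adj u x ∧ pos x < pos u)).card :=
            greedy_le_card pos s u
        _ ≤ ((s.filter (fun x => G.Adj u x)).erase w).card := Finset.card_le_card hsub
        _ < (s.filter (fun x => G.Adj u x)).card :=
            Finset.card_erase_lt_of_mem hwmem
        _ ≤ Δ := hdeg u hu
/-- Coloring lemma, triple case: two nonadjacent vertices `a, b` with a common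
neighbour `v` such that `s \ {a,b}` is connected. -/
lemma exists_coloring_triple (s : Finset V) {Δ : ℕ} (hΔ : 1 ≤ Δ) {v a b : V}
    (hva : G.Adj v a) (hvb : G.Adj v b) (hab : ¬ G.Adj a b) (hne : a ≠ b)
    (hv : v ∈ s) (ha : a ∈ s) (hb : b ∈ s)
    (hconn : ConnOn G (↑s \ {a, b}))
    (hdeg : ∀ u ∈ s, (s.filter (fun w => G.Adj u w)).card ≤ Δ) :
    ∃ C : V → ℕ, (∀ u ∈ s, ∀ w ∈ s, G.Adj u w → C u ≠ C w) ∧ ∀ u ∈ s, C u < Δ := by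
  classical
  have hvne : v ∉ ({a, b} : Set V) := by
    rintro (rfl | rfl)
    · exact G.irrefl hva
    · exact G.irrefl hvb
  have hvs' : v ∈ (↑s \ {a, b} : Set V) := ⟨hv, hvne⟩
  set d : V → ℕ := dIn (G := G) (↑s \ {a, b}) v with hd
  set B : ℕ := s.sup d with hB
  set key : V → ℕ := fun u => if u = a then 0 else if u = b then 1 else 2 + (B - d u)
    with hkey
  set pos : V → ℕ := posOf key with hpos
  have hkey_a : key a = 0 := by simp [hkey]
  have hkey_b : key b = 1 := by simp [hkey, hne.symm]
  have hkey_other : ∀ u, u ≠ a → u ≠ b → key u = 2 + (B - d u) := by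
    intro u h1 h2; simp [hkey, h1, h2]
  -- the first two vertices in the ordering are exactly a and b
  have key_eq_zero : ∀ u, key u = 0 → u = a := by
    intro u h
    by_contra h1
    by_cases h2 : u = b
    · rw [h2, hkey_b] at h; omega
    · rw [hkey_other u h1 h2] at h; omega
  have key_le_one : ∀ u, key u ≤ 1 → u = a ∨ u = b := by
    intro u h
    by_cases h1 : u = a
    · exact Or.inl h1
    by_cases h2 : u = b
    · exact Or.inr h2
    · rw [hkey_other u h1 h2] at h; omega
  set C : V → ℕ := greedy G pos s with hC
  have filter_a : s.filter (fun u => G.Adj a u ∧ pos u < pos a) = ∅ := by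
    apply Finset.filter_false_of_mem
    intro x hx
    rintro ⟨hadj, hlt⟩
    have hk : key x ≤ key a := key_le_of_posOf_le hlt.le
    rw [hkey_a, Nat.le_zero] at hk
    exact G.irrefl (key_eq_zero x hk ▸ hadj)
  have filter_b : s.filter (fun u => G.Adj b u ∧ pos u < pos b) = ∅ := by
    apply Finset.filter_false_of_mem
    intro x hx
    rintro ⟨hadj, hlt⟩
    have hk : key x ≤ key b := key_le_of_posOf_le hlt.le
    rw [hkey_b] at hk
    rcases key_le_one x hk with rfl | rfl
    · exact hab (hadj.symm)
    · exact G.irrefl hadj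
  have hCa : C a = 0 := by
    rw [hC, greedy_eq, filter_a]
    simp [mex_empty]
  have hCb : C b = 0 := by
    rw [hC, greedy_eq, filter_b]
    simp [mex_empty]
  refine ⟨C, ?_, ?_⟩
  · intro u hu w hw hadj
    exact greedy_proper pos s
      (fun x _ y _ hxy h => (G.ne_of_adj hxy) (posOf_injective key h)) hu hw hadj
  · intro u hu
    by_cases hua : u = a
    · rw [hua, hCa]; omega
    by_cases hub : u = b
    · rw [hub, hCb]; omega
    by_cases huv : u = v
    · -- the last vertex: its earlier neighbours include a and b, both colored 0
      subst huv
      set F := s.filter (fun w => G.Adj u w ∧ pos w < pos u) with hF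
      have hkeyu : key u = 2 + (B - d u) := hkey_other u hua hub
      have haF : a ∈ F := by
        refine Finset.mem_filter.mpr ⟨ha, hva, posOf_lt_of_key_lt ?_⟩
        rw [hkey_a, hkeyu]; omega
      have hbF : b ∈ F := by
        refine Finset.mem_filter.mpr ⟨hb, hvb, posOf_lt_of_key_lt ?_⟩
        rw [hkey_b, hkeyu]; omega
      have himage : F.image C = (F.erase b).image C := by
        apply Finset.Subset.antisymm
        · intro c hc
          rw [Finset.mem_image] at hc
          obtain ⟨x, hx, rfl⟩ := hc
          by_cases hxb : x = b
          · subst hxb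
            exact Finset.mem_image.mpr ⟨a, Finset.mem_erase.mpr ⟨hne, haF⟩,
              by rw [hCa, hCb]⟩
          · exact Finset.mem_image.mpr ⟨x, Finset.mem_erase.mpr ⟨hxb, hx⟩, rfl⟩
        · exact Finset.image_subset_image (Finset.erase_subset _ _)
      calc C u ≤ (F.image C).card := greedy_le_card_image pos s u
        _ = ((F.erase b).image C).card := by rw [himage]
        _ ≤ (F.erase b).card := Finset.card_image_le
        _ < F.card := Finset.card_erase_lt_of_mem hbF
        _ ≤ (s.filter (fun w => G.Adj u w)).card := Finset.card_le_card
            (by intro x hx; rw [Finset.mem_filter] at hx ⊢; exact ⟨hx.1, hx.2.1⟩)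
        _ ≤ Δ := hdeg u hu
    · -- middle vertices have a later neighbour
      have hus' : u ∈ (↑s \ {a, b} : Set V) := by
        refine ⟨hu, ?_⟩
        rintro (rfl | rfl)
        · exact hua rfl
        · exact hub rfl
      obtain ⟨w, hws', hadj, hdlt⟩ := exists_adj_dIn_lt (hconn u hus' v hvs') huv
      rw [← hd] at hdlt
      obtain ⟨hws, hwne⟩ := hws'
      have hwa : w ≠ a := fun h => hwne (h ▸ Set.mem_insert a {b})
      have hwb : w ≠ b := fun h => hwne (h ▸ Set.mem_insert_of_mem a rfl)
      have hwkey : key u < key w := by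
        rw [hkey_other u hua hub, hkey_other w hwa hwb]
        have hub' : d u ≤ B := Finset.le_sup hu
        omega
      have hwpos : pos u < pos w := posOf_lt_of_key_lt hwkey
      have hwmem : w ∈ s.filter (fun x => G.Adj u x) := Finset.mem_filter.mpr ⟨hws, hadj⟩
      have hsub : s.filter (fun x => G.Adj u x ∧ pos x < pos u) ⊆
          (s.filter (fun x => G.Adj u x)).erase w := by
        intro x hx
        rw [Finset.mem_filter] at hx
        refine Finset.mem_erase.mpr ⟨?_, Finset.mem_filter.mpr ⟨hx.1, hx.2.1⟩⟩
        rintro rfl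
        omega
      calc C u ≤ (s.filter (fun x => G.Adj u x ∧ pos x < pos u)).card :=
            greedy_le_card pos s u
        _ ≤ ((s.filter (fun x => G.Adj u x)).erase w).card := Finset.card_le_card hsub
        _ < (s.filter (fun x => G.Adj u x)).card := Finset.card_erase_lt_of_mem hwmem
        _ ≤ Δ := hdeg u hu

/-! ### Connectivity helper lemmas -/

omit [Fintype V] [DecidableEq V] [DecidableRel G.Adj] in
/-- A vertex `w ≠ x` of a connected set `t` can reach `x` while staying inside
its component of `t \ {x}` (plus `x` itself). -/
lemma comp_to_cut {t : Set V} (ht : ConnOn G t) {x w : V} (hx : x ∈ t) (hw : w ∈ t)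
    (hwx : w ≠ x) : RIn G (CompOf G (t \ {x}) w ∪ {x}) w x := by
  obtain ⟨n, hn⟩ := ht w hw x hx
  induction n generalizing w with
  | zero => exact absurd hn.1 hwx
  | succ n ih =>
    obtain ⟨w', hadj, hwt, hw't, hrest⟩ := hn
    have hwmem : w ∈ CompOf G (t \ {x}) w := CompOf.self_mem ⟨hwt, hwx⟩
    by_cases hw'x : w' = x
    · subst hw'x
      exact RIn.step hadj (Or.inl hwmem) (Or.inr rfl)
    · have hw'c : w' ∈ CompOf G (t \ {x}) w :=
        CompOf.adj_closed hwmem hadj ⟨hw't, hw'x⟩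
      have heq : CompOf G (t \ {x}) w' = CompOf G (t \ {x}) w := CompOf.eq_of_mem hw'c
      have := ih hw't hw'x hrest
      rw [heq] at this
      exact (RIn.step hadj (Or.inl hwmem) (Or.inl hw'c)).trans this

omit [Fintype V] [DecidableEq V] [DecidableRel G.Adj] in
/-- Extract the last step of a walk from `t` to an external vertex `x`. -/
lemma last_step {t : Set V} {x w : V} (hx : x ∉ t) (hw : w ∈ t)
    (h : RIn G (t ∪ {x}) w x) : ∃ a ∈ t, G.Adj a x := by
  obtain ⟨n, hn⟩ := h
  induction n generalizing w with
  | zero => exact absurd (hn.1 ▸ hw) hx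
  | succ n ih =>
    obtain ⟨w', hadj, _, hw', hrest⟩ := hn
    by_cases hw'x : w' = x
    · exact ⟨w, hw, hw'x ▸ hadj⟩
    · exact ih (hw'.resolve_right hw'x) hrest

omit [Fintype V] [DecidableEq V] [DecidableRel G.Adj] in
/-- Each component of `t \ {c}` contains a neighbour of `c`, when `t` is connected. -/
lemma neighbor_in_comp {t : Set V} (ht : ConnOn G t) {c w : V} (hc : c ∈ t)
    (hw : w ∈ t \ {c}) : ∃ y ∈ CompOf G (t \ {c}) w, G.Adj c y := by
  have h1 := comp_to_cut ht hc hw.1 hw.2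
  have h2 := last_step (x := c) (t := CompOf G (t \ {c}) w)
    (fun hmem => (CompOf.subset hmem).2 rfl) (CompOf.self_mem hw) h1
  obtain ⟨a, ha, hadj⟩ := h2
  exact ⟨a, ha, hadj.symm⟩

omit [Fintype V] [DecidableEq V] [DecidableRel G.Adj] in
/-- Rerouting: a walk in `t` between vertices different from `aa` can avoid `aa`,
provided any two neighbours of `aa` in `t` are connected within `t \ {aa}`. -/
lemma reroute {t : Set V} {aa : V}
    (hby : ∀ p q, p ∈ t \ {aa} → q ∈ t \ {aa} → G.Adj aa p → G.Adj aa q →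
      RIn G (t \ {aa}) p q)
    {u w : V} (hu : u ≠ aa) (hw : w ≠ aa) (h : RIn G t u w) : RIn G (t \ {aa}) u w := by
  obtain ⟨n, hn⟩ := h
  induction n using Nat.strong_induction_on generalizing u with
  | _ n ih =>
    cases n with
    | zero =>
      obtain ⟨rfl, hmem⟩ := hn
      exact RIn.refl ⟨hmem, hw⟩
    | succ n =>
      obtain ⟨u', hadj, hut, hu't, hrest⟩ := hn
      by_cases hu'a : u' = aa
      · rw [hu'a] at hadj hrest
        cases n with
        | zero => exact absurd hrest.1.symm hw
        | succ m =>
          obtain ⟨u'', hadj', _, hu''t, hrest'⟩ := hrest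
          have hu''a : u'' ≠ aa := fun h => G.irrefl (h ▸ hadj')
          have h1 : RIn G (t \ {aa}) u u'' :=
            hby u u'' ⟨hut, hu⟩ ⟨hu''t, hu''a⟩ hadj.symm hadj'
          exact h1.trans (ih m (by omega) hu''a hrest')
      · have h1 : RIn G (t \ {aa}) u u' := RIn.step hadj ⟨hut, hu⟩ ⟨hu't, hu'a⟩
        exact h1.trans (ih n (by omega) hu'a hrest)

/-! ### Cut vertex case -/

/-- Transposition of `p` and `0` on `ℕ`. -/
def swapNat (p x : ℕ) : ℕ := if x = p then 0 else if x = 0 then p else x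

lemma swapNat_injective (p : ℕ) : Function.Injective (swapNat p) := by
  intro x y
  unfold swapNat
  split_ifs <;> omega

lemma swapNat_lt {p x Δ : ℕ} (hp : p < Δ) (hx : x < Δ) (h0 : 0 < Δ) : swapNat p x < Δ := by
  unfold swapNat; split_ifs <;> omega

lemma swapNat_ne_zero {p x : ℕ} (h : x ≠ p) : swapNat p x ≠ 0 := by
  unfold swapNat; split_ifs <;> omega

/-- Coloring lemma, cut vertex case. -/
lemma exists_coloring_cutvertex (s : Finset V) {Δ : ℕ} (hΔ : 1 ≤ Δ) {c : V} (hc : c ∈ s)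
    (hconn : ConnOn G ↑s)
    (hdeg : ∀ u ∈ s, (s.filter (fun w => G.Adj u w)).card ≤ Δ)
    (hcut : ¬ ConnOn G (↑s \ {c})) :
    ∃ C : V → ℕ, (∀ u ∈ s, ∀ w ∈ s, G.Adj u w → C u ≠ C w) ∧ ∀ u ∈ s, C u < Δ := by
  classical
  unfold ConnOn at hcut
  push_neg at hcut
  obtain ⟨y, hy, z, hz, hyz⟩ := hcut
  set T : V → Set V := fun x => CompOf G (↑s \ {c}) x with hT
  -- a piece is disjoint from `T y` or from `T z`
  have hdisj : ∀ x ∈ (↑s \ {c} : Set V), (T x ∩ T y = ∅) ∨ (T x ∩ T z = ∅) := by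
    intro x hx
    by_contra hcon
    push_neg at hcon
    obtain ⟨h1, h2⟩ := hcon
    obtain ⟨w1, hw1⟩ := h1
    obtain ⟨w2, hw2⟩ := h2
    exact hyz ((hw1.2 : RIn G _ y w1).trans ((hw1.1 : RIn G _ x w1).symm.trans
      ((hw2.1 : RIn G _ x w2).trans (hw2.2 : RIn G _ z w2).symm)))
  -- the `Good` property for pieces
  set Good : Set V → (V → ℕ) → Prop := fun t C =>
    (∀ u ∈ t ∪ {c}, ∀ w ∈ t ∪ {c}, G.Adj u w → C u ≠ C w) ∧ ∀ u ∈ t ∪ {c}, C u < Δ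
    with hGoodDef
  have hGood : ∀ x ∈ (↑s \ {c} : Set V), ∃ C, Good (T x) C := by
    intro x hx
    set Px : Finset V := insert c (T x).toFinite.toFinset with hPxdef
    have hPx : (↑Px : Set V) = T x ∪ {c} := by
      ext u
      simp only [hPxdef, Finset.coe_insert, Set.mem_insert_iff, Set.Finite.coe_toFinset,
        Set.mem_union, Set.mem_singleton_iff]
      tauto
    have hTsub : T x ⊆ (↑s \ {c} : Set V) := CompOf.subset
    have hPxs : Px ⊆ s := by
      intro u hu
      rw [hPxdef, Finset.mem_insert] at hu
      rcases hu with rfl | hu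
      · exact hc
      · exact (hTsub ((T x).toFinite.mem_toFinset.mp hu)).1
    have hcPx : c ∈ Px := Finset.mem_insert_self _ _
    have hTmem : ∀ {u}, u ∈ T x → u ∈ Px := by
      intro u hu
      rw [hPxdef, Finset.mem_insert]
      exact Or.inr ((T x).toFinite.mem_toFinset.mpr hu)
    -- a neighbour of c in the piece
    obtain ⟨y', hy', hadjy'⟩ := neighbor_in_comp hconn (Finset.mem_coe.mpr hc) hx
    -- connectivity of the piece
    have hreach : ∀ w ∈ (↑Px : Set V), RIn G ↑Px c w := by
      intro w hw
      have hstep : RIn G ↑Px c y' :=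
        RIn.step hadjy' (Finset.mem_coe.mpr hcPx) (Finset.mem_coe.mpr (hTmem hy'))
      rw [hPx] at hw
      rcases hw with hw | hw
      · refine hstep.trans ?_
        have h2 : RIn G (T x) y' w := CompOf.connOn y' hy' w hw
        refine h2.mono ?_
        intro q hq
        exact Finset.mem_coe.mpr (hTmem hq)
      · rw [Set.mem_singleton_iff] at hw
        subst hw
        exact RIn.refl (Finset.mem_coe.mpr hcPx)
    have hconnPx : ConnOn G ↑Px := fun u hu w hw => (hreach u hu).symm.trans (hreach w hw)
    -- c has small degree in the piece: a neighbour in the other component is missing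
    have hother : ∃ o ∈ (↑s \ {c} : Set V), T x ∩ T o = ∅ := by
      rcases hdisj x hx with h | h
      · exact ⟨y, hy, h⟩
      · exact ⟨z, hz, h⟩
    obtain ⟨o, ho, hdisjo⟩ := hother
    obtain ⟨y'', hy'', hadjy''⟩ := neighbor_in_comp hconn (Finset.mem_coe.mpr hc) ho
    have hy''s : y'' ∈ s := (CompOf.subset hy'').1
    have hy''Px : y'' ∉ Px := by
      intro hmem
      have : y'' ∈ (↑Px : Set V) := Finset.mem_coe.mpr hmem
      rw [hPx] at this
      rcases this with h | h
      · exact Set.eq_empty_iff_forall_notMem.mp hdisjo y'' ⟨h, hy''⟩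
      · exact (CompOf.subset hy'').2 h
    have hvdeg : (Px.filter (fun w => G.Adj c w)).card < Δ := by
      have hy''f : y'' ∈ s.filter (fun w => G.Adj c w) :=
        Finset.mem_filter.mpr ⟨hy''s, hadjy''⟩
      have hsub : Px.filter (fun w => G.Adj c w) ⊆
          (s.filter (fun w => G.Adj c w)).erase y'' := by
        intro q hq
        rw [Finset.mem_filter] at hq
        refine Finset.mem_erase.mpr ⟨?_, Finset.mem_filter.mpr ⟨hPxs hq.1, hq.2⟩⟩
        rintro rfl
        exact hy''Px hq.1
      calc (Px.filter (fun w => G.Adj c w)).card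
          ≤ ((s.filter (fun w => G.Adj c w)).erase y'').card := Finset.card_le_card hsub
        _ < (s.filter (fun w => G.Adj c w)).card := Finset.card_erase_lt_of_mem hy''f
        _ ≤ Δ := hdeg c hc
    have hdeg' : ∀ u ∈ Px, (Px.filter (fun w => G.Adj u w)).card ≤ Δ := by
      intro u hu
      refine le_trans (Finset.card_le_card ?_) (hdeg u (hPxs hu))
      intro q hq
      rw [Finset.mem_filter] at hq ⊢
      exact ⟨hPxs hq.1, hq.2⟩
    obtain ⟨C, hCp, hCb⟩ := exists_coloring_pendant Px hcPx hconnPx hdeg' hvdeg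
    refine ⟨C, ?_, ?_⟩
    · intro u hu w hw hadj
      have hu' : u ∈ Px := Finset.mem_coe.mp (hPx ▸ hu)
      have hw' : w ∈ Px := Finset.mem_coe.mp (hPx ▸ hw)
      exact hCp u hu' w hw' hadj
    · intro u hu
      exact hCb u (Finset.mem_coe.mp (hPx ▸ hu))
  -- choice of a coloring for each piece, as a function of the component
  set F : Set V → (V → ℕ) := fun t =>
    if h : ∃ C, Good t C then h.choose else fun _ => 0 with hFdef
  have hF : ∀ t, (∃ C, Good t C) → Good t (F t) := by
    intro t h
    rw [hFdef]
    simp only [dif_pos h]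
    exact h.choose_spec
  -- the glued coloring
  set Cstar : V → ℕ := fun u => if u = c then 0 else swapNat (F (T u) c) (F (T u) u)
    with hCstar
  have hTeq : ∀ {u w : V}, u ∈ (↑s \ {c} : Set V) → w ∈ (↑s \ {c} : Set V) →
      G.Adj u w → T u = T w := by
    intro u w hu hw hadj
    have : w ∈ T u := CompOf.adj_closed (CompOf.self_mem hu) hadj hw
    exact (CompOf.eq_of_mem this).symm
  refine ⟨Cstar, ?_, ?_⟩
  · intro u hu w hw hadj
    by_cases huc : u = c <;> by_cases hwc : w = c
    · exact absurd (huc ▸ hwc ▸ hadj) (G.irrefl)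
    · -- u = c, w ≠ c
      rw [huc] at hadj ⊢
      have hw' : w ∈ (↑s \ {c} : Set V) := ⟨hw, hwc⟩
      have hg := hF (T w) (hGood w hw')
      have hne : F (T w) w ≠ F (T w) c :=
        hg.1 w (Or.inl (CompOf.self_mem hw')) c (Or.inr rfl) hadj.symm
      simp only [hCstar, if_pos rfl, if_neg hwc]
      exact fun h => (swapNat_ne_zero hne) h.symm
    · -- w = c, u ≠ c
      rw [hwc] at hadj ⊢
      have hu' : u ∈ (↑s \ {c} : Set V) := ⟨hu, huc⟩
      have hg := hF (T u) (hGood u hu')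
      have hne : F (T u) u ≠ F (T u) c :=
        hg.1 u (Or.inl (CompOf.self_mem hu')) c (Or.inr rfl) hadj
      simp only [hCstar, if_pos rfl, if_neg huc]
      exact swapNat_ne_zero hne
    · have hu' : u ∈ (↑s \ {c} : Set V) := ⟨hu, huc⟩
      have hw' : w ∈ (↑s \ {c} : Set V) := ⟨hw, hwc⟩
      have hTuw : T u = T w := hTeq hu' hw' hadj
      have hg := hF (T u) (hGood u hu')
      have hne : F (T u) u ≠ F (T u) w :=
        hg.1 u (Or.inl (CompOf.self_mem hu')) w (Or.inl (hTuw ▸ CompOf.self_mem hw')) hadj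
      simp only [hCstar, if_neg huc, if_neg hwc, ← hTuw]
      exact fun h => hne (swapNat_injective _ h)
  · intro u hu
    by_cases huc : u = c
    · simp only [hCstar, if_pos huc]; omega
    · have hu' : u ∈ (↑s \ {c} : Set V) := ⟨hu, huc⟩
      have hg := hF (T u) (hGood u hu')
      simp only [hCstar, if_neg huc]
      exact swapNat_lt (hg.2 c (Or.inr rfl)) (hg.2 u (Or.inl (CompOf.self_mem hu'))) (by omega)

/-! ### Fragments -/

omit [Fintype V] [DecidableEq V] [DecidableRel G.Adj] in
lemma CompOf.mono {t t' : Set V} (h : t ⊆ t') (p : V) : CompOf G t p ⊆ CompOf G t' p :=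
  fun _ hu => RIn.mono h hu

variable (G) in
/-- A fragment of `H`: a component of `H \ {x}` that is not all of `H \ {x}`. -/
def IsFrag (H : Set V) (x : V) (E : Set V) : Prop :=
  x ∈ H ∧ (∃ y, y ∈ H \ {x} ∧ E = CompOf G (H \ {x}) y) ∧ ∃ z, z ∈ H \ {x} ∧ z ∉ E

omit [Fintype V] [DecidableEq V] [DecidableRel G.Adj] in
lemma IsFrag.subset {H : Set V} {x : V} {E : Set V} (h : IsFrag G H x E) : E ⊆ H \ {x} := by
  obtain ⟨_, ⟨y, _, rfl⟩, _⟩ := h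
  exact CompOf.subset

omit [Fintype V] [DecidableEq V] [DecidableRel G.Adj] in
lemma IsFrag.nonempty {H : Set V} {x : V} {E : Set V} (h : IsFrag G H x E) : E.Nonempty := by
  obtain ⟨_, ⟨y, hy, rfl⟩, _⟩ := h
  exact ⟨y, CompOf.self_mem hy⟩

omit [Fintype V] [DecidableEq V] [DecidableRel G.Adj] in
/-- Descent: a cut vertex inside a fragment produces a strictly smaller fragment. -/
lemma frag_step {H : Set V} (hH : ConnOn G H) {x : V} {E : Set V}
    (hfrag : IsFrag G H x E) {u : V} (hu : u ∈ E) (hcut : ¬ ConnOn G (H \ {u})) :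
    ∃ E', IsFrag G H u E' ∧ E' ⊆ E \ {u} := by
  obtain ⟨hxH, ⟨y, hy, hE⟩, ⟨z, hz, hzE⟩⟩ := hfrag
  have huH : u ∈ H \ {x} := (hE ▸ hu : u ∈ CompOf G (H \ {x}) y).mem_right
  have hxu : x ∈ H \ {u} := ⟨hxH, fun h => huH.2 (h ▸ rfl)⟩
  unfold ConnOn at hcut
  push_neg at hcut
  obtain ⟨p, hp, q, hq, hpq⟩ := hcut
  -- pick the component not containing `x`
  have hmain : ∃ w₀, w₀ ∈ H \ {u} ∧ x ∉ CompOf G (H \ {u}) w₀ := by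
    by_cases hxKp : x ∈ CompOf G (H \ {u}) p
    · refine ⟨q, hq, fun hxKq => hpq (hxKp.trans hxKq.symm)⟩
    · exact ⟨p, hp, hxKp⟩
  obtain ⟨w₀, hw₀, hxK⟩ := hmain
  set K : Set V := CompOf G (H \ {u}) w₀ with hK
  refine ⟨K, ⟨(huH.1 : u ∈ H), ⟨w₀, hw₀, rfl⟩, ⟨x, hxu, hxK⟩⟩, ?_⟩
  -- show `K ⊆ E \ {u}`
  intro r hr
  have hrH : r ∈ H \ {u} := CompOf.subset hr
  refine ⟨?_, fun h => hrH.2 h⟩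
  by_contra hrE
  -- r ∉ E; then r reaches x avoiding u, so x ∈ K, contradiction
  have hrx : r ≠ x := by
    rintro rfl
    exact hxK hr
  have hrHx : r ∈ H \ {x} := ⟨hrH.1, hrx⟩
  have hreach := comp_to_cut hH (x := x) hxH hrH.1 hrx
  -- the component of r in H \ {x} is disjoint from E, hence avoids u
  have hdisj : u ∉ CompOf G (H \ {x}) r := by
    intro humem
    have : CompOf G (H \ {x}) u = CompOf G (H \ {x}) r := CompOf.eq_of_mem humem
    have hue : CompOf G (H \ {x}) u = E := by
      rw [hE]
      exact CompOf.eq_of_mem (hE ▸ hu)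
    rw [hue] at this
    exact hrE (this ▸ CompOf.self_mem hrHx)
  have hsub : CompOf G (H \ {x}) r ∪ {x} ⊆ H \ {u} := by
    rintro q' (hq' | hq')
    · exact ⟨(CompOf.subset hq').1, fun h => hdisj (h ▸ hq')⟩
    · rw [Set.mem_singleton_iff] at hq'
      exact hq' ▸ hxu
  have : RIn G (H \ {u}) r x := hreach.mono hsub
  have : x ∈ CompOf G (H \ {u}) r := this
  rw [CompOf.eq_of_mem (hK ▸ hr : r ∈ CompOf G (H \ {u}) w₀)] at this
  exact hxK this

/-- There is a minimal fragment inside any fragment; its vertices are non-cutvertices. -/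
lemma exists_min_frag {H : Set V} (hH : ConnOn G H) :
    ∀ n {c : V} {D : Set V}, D.ncard ≤ n → IsFrag G H c D →
    ∃ x E, IsFrag G H x E ∧ E ⊆ D ∧ ∀ u ∈ E, ConnOn G (H \ {u}) := by
  intro n
  induction n with
  | zero =>
    intro c D hcard hfrag
    obtain ⟨w, hw⟩ := hfrag.nonempty
    have := (Set.ncard_pos (Set.toFinite D)).mpr ⟨w, hw⟩
    omega
  | succ n ih =>
    intro c D hcard hfrag
    by_cases hgood : ∀ u ∈ D, ConnOn G (H \ {u})
    · exact ⟨c, D, hfrag, subset_rfl, hgood⟩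
    · push_neg at hgood
      obtain ⟨u, hu, hcut⟩ := hgood
      obtain ⟨E', hE'frag, hE'sub⟩ := frag_step hH hfrag hu hcut
      have hlt : E'.ncard ≤ n := by
        have h1 : E'.ncard ≤ (D \ {u}).ncard := Set.ncard_le_ncard hE'sub (Set.toFinite _)
        have h2 : (D \ {u}).ncard < D.ncard :=
          Set.ncard_diff_singleton_lt_of_mem hu (Set.toFinite D)
        omega
      obtain ⟨x, E, h1, h2, h3⟩ := ih hlt hE'frag
      exact ⟨x, E, h1, h2.trans (hE'sub.trans Set.diff_subset), h3⟩

/-- Main structural lemma: in a 2-connected "regular-like" set, there are two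
nonadjacent vertices with a common neighbour whose removal keeps the set connected. -/
lemma exists_triple (s : Finset V)
    (hconn : ConnOn G ↑s)
    (h2conn : ∀ x ∈ s, ConnOn G (↑s \ {x}))
    (hclosed : ∀ u ∈ s, ∀ w, G.Adj u w → w ∈ s)
    (hdeg3 : ∀ u ∈ s, 3 ≤ (s.filter (fun w => G.Adj u w)).card)
    (hnc : ∀ v ∈ s, ∃ a b, G.Adj v a ∧ G.Adj v b ∧ ¬ G.Adj a b ∧ a ≠ b)
    (hs : s.Nonempty) :
    ∃ v a b, v ∈ s ∧ a ∈ s ∧ b ∈ s ∧ G.Adj v a ∧ G.Adj v b ∧ ¬ G.Adj a b ∧ a ≠ b ∧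
      ConnOn G (↑s \ {a, b}) := by
  classical
  by_cases hcase : ∃ v a b, v ∈ s ∧ a ∈ s ∧ b ∈ s ∧ G.Adj v a ∧ G.Adj v b ∧ ¬ G.Adj a b ∧
      a ≠ b ∧ ConnOn G (↑s \ {a, b})
  · exact hcase
  obtain ⟨v₀, hv₀⟩ := hs
  obtain ⟨a₀, b₀, hva, hvb, hab₀, hne₀⟩ := hnc v₀ hv₀
  have ha₀s : a₀ ∈ s := hclosed v₀ hv₀ a₀ hva
  have hb₀s : b₀ ∈ s := hclosed v₀ hv₀ b₀ hvb
  have hcut : ¬ ConnOn G (↑s \ {a₀, b₀}) := fun h =>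
    hcase ⟨v₀, a₀, b₀, hv₀, ha₀s, hb₀s, hva, hvb, hab₀, hne₀, h⟩
  set H : Set V := ↑s \ {a₀} with hHdef
  have hHconn : ConnOn G H := h2conn a₀ ha₀s
  have hHsub : H ⊆ ↑s := Set.diff_subset
  have hHb : H \ {b₀} = ↑s \ {a₀, b₀} := by
    rw [hHdef, Set.diff_diff, Set.singleton_union]
  have hcutH : ¬ ConnOn G (H \ {b₀}) := by rw [hHb]; exact hcut
  unfold ConnOn at hcutH
  push_neg at hcutH
  obtain ⟨y, hy, z, hz, hyz⟩ := hcutH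
  set D1 : Set V := CompOf G (H \ {b₀}) y with hD1
  set D2 : Set V := CompOf G (H \ {b₀}) z with hD2
  have hb₀H : b₀ ∈ H := ⟨hb₀s, fun h => hne₀ (Set.mem_singleton_iff.mp h).symm⟩
  have hD12 : D1 ∩ D2 = ∅ := by
    by_contra h
    obtain ⟨w, hw1, hw2⟩ := Set.nonempty_iff_ne_empty.mpr h
    exact hyz ((hw1 : RIn G _ y w).trans (hw2 : RIn G _ z w).symm)
  have hfrag1 : IsFrag G H b₀ D1 := ⟨hb₀H, ⟨y, hy, rfl⟩, ⟨z, hz, fun h => hyz h⟩⟩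
  have hfrag2 : IsFrag G H b₀ D2 := ⟨hb₀H, ⟨z, hz, rfl⟩, ⟨y, hy, fun h => hyz (RIn.symm h)⟩⟩
  obtain ⟨x1, E1, hf1, hE1D1, hgood1⟩ := exists_min_frag hHconn D1.ncard le_rfl hfrag1
  obtain ⟨x2, E2, hf2, hE2D2, hgood2⟩ := exists_min_frag hHconn D2.ncard le_rfl hfrag2
  have hE12 : E1 ∩ E2 = ∅ := by
    rw [← Set.subset_empty_iff, ← hD12]
    exact Set.inter_subset_inter hE1D1 hE2D2
  -- an `x'` of a fragment inside a component of `H \ {b₀}` belongs to that component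
  -- (unless it is `b₀` itself)
  have hx_in : ∀ (x' : V) (E' : Set V) (p : V), p ∈ H \ {b₀} → IsFrag G H x' E' →
      E' ⊆ CompOf G (H \ {b₀}) p → x' ≠ b₀ → x' ∈ CompOf G (H \ {b₀}) p := by
    intro x' E' p hp hf hsub hxb
    by_contra hxD
    obtain ⟨hx'H, ⟨y', hy', hE'⟩, -⟩ := hf
    have hy'E : y' ∈ E' := hE' ▸ CompOf.self_mem hy'
    have hDsub : CompOf G (H \ {b₀}) p ⊆ H \ {x'} := fun r hr =>
      ⟨(CompOf.subset hr).1, fun h => hxD ((Set.mem_singleton_iff.mp h) ▸ hr)⟩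
    have hDE : CompOf G (H \ {b₀}) p ⊆ E' := by
      intro r hr
      have h1 : RIn G (CompOf G (H \ {b₀}) p) y' r := CompOf.connOn y' (hsub hy'E) r hr
      have h2 : RIn G (H \ {x'}) y' r := h1.mono hDsub
      rw [hE']
      exact h2
    obtain ⟨y₁, hy₁D, hadj₁⟩ := neighbor_in_comp hHconn hb₀H hp
    have hy₁E : y₁ ∈ E' := hDE hy₁D
    have hb₀mem : b₀ ∈ H \ {x'} :=
      ⟨hb₀H, fun h => hxb (Set.mem_singleton_iff.mp h).symm⟩
    have hb₀E : b₀ ∈ E' := by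
      rw [hE'] at hy₁E ⊢
      exact CompOf.adj_closed hy₁E hadj₁.symm hb₀mem
    exact (CompOf.subset (hsub hb₀E)).2 rfl
  have hx1E2 : x1 ∉ E2 := by
    intro hx1E2
    have hx1D2 : x1 ∈ D2 := hE2D2 hx1E2
    have hx1b₀ : x1 ≠ b₀ := fun h => (CompOf.subset hx1D2).2 (h ▸ rfl)
    have : x1 ∈ D1 := hx_in x1 E1 y hy hf1 hE1D1 hx1b₀
    exact Set.eq_empty_iff_forall_notMem.mp hD12 x1 ⟨this, hx1D2⟩
  -- unpack the two fragments
  have hE1sub : E1 ⊆ H \ {x1} := hf1.subset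
  have hE2sub : E2 ⊆ H \ {x2} := hf2.subset
  obtain ⟨hx1H, ⟨y1, hy1, hE1⟩, -⟩ := hf1
  obtain ⟨hx2H, ⟨y2, hy2, hE2⟩, -⟩ := hf2
  have hx1s : x1 ∈ s := hHsub hx1H
  have hx2s : x2 ∈ s := hHsub hx2H
  have hx1a₀ : x1 ≠ a₀ := fun h => hx1H.2 (h ▸ rfl)
  have hx2a₀ : x2 ≠ a₀ := fun h => hx2H.2 (h ▸ rfl)
  -- a₀ has a neighbour in E1 and in E2
  have hfind : ∀ (x' y' : V) (E' : Set V), x' ∈ s → x' ≠ a₀ → y' ∈ H \ {x'} →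
      E' = CompOf G (H \ {x'}) y' → ∃ aa ∈ E', G.Adj a₀ aa := by
    intro x' y' E' hx's hx'a₀ hy' hE'
    have htconn : ConnOn G (↑s \ {x'}) := h2conn x' hx's
    have ha₀t : a₀ ∈ (↑s \ {x'} : Set V) := ⟨ha₀s, fun h => hx'a₀ (Set.mem_singleton_iff.mp h).symm⟩
    have hcomm : (↑s \ {x'} : Set V) \ {a₀} = H \ {x'} := by
      rw [hHdef, Set.diff_diff_comm]
    have hy'' : y' ∈ (↑s \ {x'} : Set V) \ {a₀} := by rw [hcomm]; exact hy'
    obtain ⟨aa, haa, hadj⟩ := neighbor_in_comp htconn ha₀t hy''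
    refine ⟨aa, ?_, hadj⟩
    rw [hE']
    rw [hcomm] at haa
    exact haa
  obtain ⟨a, haE1, hadja⟩ := hfind x1 y1 E1 hx1s hx1a₀ hy1 hE1
  obtain ⟨b, hbE2, hadjb⟩ := hfind x2 y2 E2 hx2s hx2a₀ hy2 hE2
  have haH : a ∈ H := (hE1sub haE1).1
  have hbH : b ∈ H := (hE2sub hbE2).1
  have has : a ∈ s := hHsub haH
  have hbs : b ∈ s := hHsub hbH
  have hbE1 : b ∉ E1 := fun h => Set.eq_empty_iff_forall_notMem.mp hE12 b ⟨h, hbE2⟩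
  have hbx1 : b ≠ x1 := fun h => hx1E2 (h ▸ hbE2)
  have hax1 : a ≠ x1 := fun h => (hE1sub haE1).2 (h ▸ rfl)
  have habne : a ≠ b := fun h => hbE1 (h ▸ haE1)
  have hab : ¬ G.Adj a b := by
    intro h
    have hbmem : b ∈ H \ {x1} := ⟨hbH, fun hh => hbx1 (Set.mem_singleton_iff.mp hh)⟩
    have : b ∈ E1 := by
      rw [hE1] at haE1 ⊢
      exact CompOf.adj_closed haE1 h hbmem
    exact hbE1 this
  -- neighbours of `a` in `H` lie in `E1 ∪ {x1}`
  have hnbrE1 : ∀ r, G.Adj a r → r ∈ H → r ∈ E1 ∪ {x1} := by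
    intro r hr hrH
    by_cases hrx : r = x1
    · exact Or.inr (hrx ▸ rfl)
    · refine Or.inl ?_
      rw [hE1] at haE1 ⊢
      exact CompOf.adj_closed haE1 hr ⟨hrH, fun hh => hrx (Set.mem_singleton_iff.mp hh)⟩
  -- `E1 \ {a}` hangs together with `x1`
  have hstay : ∀ p ∈ (E1 \ {a}) ∪ {x1}, RIn G ((E1 \ {a}) ∪ {x1}) p x1 := by
    intro p hp
    rcases hp with hpE | hp
    · have hHa : ConnOn G (H \ {a}) := hgood1 a haE1
      have hx1Ha : x1 ∈ H \ {a} := ⟨hx1H, fun h => hax1 (Set.mem_singleton_iff.mp h).symm⟩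
      have hpHa : p ∈ H \ {a} := ⟨(hE1sub hpE.1).1, hpE.2⟩
      have hpx1 : p ≠ x1 := fun h => (hE1sub hpE.1).2 (h ▸ rfl)
      have h1 := comp_to_cut hHa hx1Ha hpHa hpx1
      refine h1.mono ?_
      rintro r (hr | hr)
      · have hcomm2 : (H \ {a}) \ {x1} = (H \ {x1}) \ {a} := Set.diff_diff_comm
        rw [hcomm2] at hr
        refine Or.inl ⟨?_, (CompOf.subset hr).2⟩
        have h2 : r ∈ CompOf G (H \ {x1}) p := CompOf.mono Set.diff_subset p hr
        have h3 : CompOf G (H \ {x1}) p = E1 := by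
          rw [hE1] at hpE ⊢
          exact CompOf.eq_of_mem hpE.1
        exact h3 ▸ h2
      · exact Or.inr hr
    · rw [Set.mem_singleton_iff] at hp
      exact hp ▸ RIn.refl (Or.inr rfl)
  -- bypass property for rerouting around `a` within `H \ {b}`
  have hby : ∀ p q, p ∈ (H \ {b}) \ {a} → q ∈ (H \ {b}) \ {a} →
      G.Adj a p → G.Adj a q → RIn G ((H \ {b}) \ {a}) p q := by
    intro p q hp hq hap haq
    have hpm : p ∈ (E1 \ {a}) ∪ {x1} := by
      rcases hnbrE1 p hap hp.1.1 with h | h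
      · exact Or.inl ⟨h, hp.2⟩
      · exact Or.inr h
    have hqm : q ∈ (E1 \ {a}) ∪ {x1} := by
      rcases hnbrE1 q haq hq.1.1 with h | h
      · exact Or.inl ⟨h, hq.2⟩
      · exact Or.inr h
    have h1 : RIn G ((E1 \ {a}) ∪ {x1}) p q := (hstay p hpm).trans (hstay q hqm).symm
    refine h1.mono ?_
    rintro r (hr | hr)
    · exact ⟨⟨(hE1sub hr.1).1, fun hh => hbE1 ((Set.mem_singleton_iff.mp hh) ▸ hr.1)⟩, hr.2⟩
    · rw [Set.mem_singleton_iff] at hr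
      subst hr
      exact ⟨⟨hx1H, fun hh => hbx1 (Set.mem_singleton_iff.mp hh).symm⟩,
        fun hh => hax1 (Set.mem_singleton_iff.mp hh).symm⟩
  have hconnHb : ConnOn G (H \ {b}) := hgood2 b hbE2
  have hconnHab : ConnOn G ((H \ {b}) \ {a}) := by
    intro u hu w hw
    exact reroute hby (fun h => hu.2 (h ▸ rfl)) (fun h => hw.2 (h ▸ rfl))
      (hconnHb u hu.1 w hw.1)
  -- the third neighbour of a₀
  have hz₀ : ∃ z₀ ∈ s.filter (fun w => G.Adj a₀ w), z₀ ≠ a ∧ z₀ ≠ b := by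
    by_contra hcon
    push_neg at hcon
    have hsub2 : s.filter (fun w => G.Adj a₀ w) ⊆ {a, b} := by
      intro q hq
      rcases eq_or_ne q a with rfl | hqa
      · exact Finset.mem_insert_self _ _
      · rw [hcon q hq hqa]
        exact Finset.mem_insert_of_mem (Finset.mem_singleton_self _)
    have h1 := Finset.card_le_card hsub2
    have h2 : ({a, b} : Finset V).card ≤ 2 := Finset.card_insert_le _ _ |>.trans (by simp)
    have h3 := hdeg3 a₀ ha₀s
    omega
  obtain ⟨z₀, hz₀f, hz₀a, hz₀b⟩ := hz₀
  rw [Finset.mem_filter] at hz₀f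
  obtain ⟨hz₀s, hadjz₀⟩ := hz₀f
  have hz₀a₀ : z₀ ≠ a₀ := fun h => G.irrefl (h ▸ hadjz₀)
  have haa₀ : a ≠ a₀ := fun h => haH.2 (h ▸ rfl)
  have hba₀ : b ≠ a₀ := fun h => hbH.2 (h ▸ rfl)
  -- now glue: a₀ connects everything in `s \ {a, b}`
  have ha₀ab : a₀ ∈ (↑s \ {a, b} : Set V) := by
    refine ⟨ha₀s, ?_⟩
    rintro (h | h)
    · exact haa₀ h.symm
    · exact hba₀ h.symm
  have hz₀ab : z₀ ∈ (H \ {b}) \ {a} := by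
    refine ⟨⟨⟨hz₀s, fun h => hz₀a₀ (Set.mem_singleton_iff.mp h)⟩,
      fun h => hz₀b (Set.mem_singleton_iff.mp h)⟩,
      fun h => hz₀a (Set.mem_singleton_iff.mp h)⟩
  have hsubfin : ((H \ {b}) \ {a}) ⊆ (↑s \ {a, b} : Set V) := by
    intro r hr
    refine ⟨hHsub hr.1.1, ?_⟩
    rintro (h | h)
    · exact hr.2 h
    · exact hr.1.2 h
  have hz₀ab' : z₀ ∈ (↑s \ {a, b} : Set V) := hsubfin hz₀ab
  have hreach : ∀ w ∈ (↑s \ {a, b} : Set V), RIn G (↑s \ {a, b}) a₀ w := by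
    intro w hw
    by_cases hwa₀ : w = a₀
    · subst hwa₀
      exact RIn.refl ha₀ab
    · have hwmem : w ∈ (H \ {b}) \ {a} := by
        refine ⟨⟨⟨hw.1, fun h => hwa₀ (Set.mem_singleton_iff.mp h)⟩, ?_⟩, ?_⟩
        · intro h
          exact hw.2 (Or.inr h)
        · intro h
          exact hw.2 (Or.inl h)
      exact (RIn.step hadjz₀ ha₀ab hz₀ab').trans
        ((hconnHab z₀ hz₀ab w hwmem).mono hsubfin)
  exact ⟨a₀, a, b, ha₀s, has, hbs, hadja, hadjb, hab, habne,
    fun u hu w hw => (hreach u hu).symm.trans (hreach w hw)⟩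

/-- Small sets are colored injectively. -/
lemma exists_coloring_small (s : Finset V) {Δ : ℕ} (hcard : s.card ≤ Δ) :
    ∃ C : V → ℕ, (∀ u ∈ s, ∀ w ∈ s, G.Adj u w → C u ≠ C w) ∧ ∀ u ∈ s, C u < Δ := by
  classical
  refine ⟨fun u => s.toList.idxOf u, ?_, ?_⟩
  · intro u hu w hw hadj h
    exact G.ne_of_adj hadj
      ((List.idxOf_inj (Finset.mem_toList.mpr hu)).mp h)
  · intro u hu
    have h2 := List.idxOf_lt_length_iff.mpr (Finset.mem_toList.mpr hu)
    rw [Finset.length_toList] at h2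
    exact lt_of_lt_of_le h2 hcard

/-- Main lemma: any connected set colorable with `Δ` colors. -/
lemma exists_coloring_conn (s : Finset V) {Δ : ℕ} (hΔ : 3 ≤ Δ)
    (hconn : ConnOn G ↑s)
    (hdegAll : ∀ u ∈ s, (G.neighborFinset u).card ≤ Δ)
    (hclq : G.CliqueFree (Δ + 1)) :
    ∃ C : V → ℕ, (∀ u ∈ s, ∀ w ∈ s, G.Adj u w → C u ≠ C w) ∧ ∀ u ∈ s, C u < Δ := by
  classical
  have hdegS : ∀ u ∈ s, (s.filter (fun w => G.Adj u w)).card ≤ Δ := by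
    intro u hu
    refine le_trans (Finset.card_le_card ?_) (hdegAll u hu)
    intro q hq
    rw [Finset.mem_filter] at hq
    exact (G.mem_neighborFinset u q).mpr hq.2
  by_cases h1 : ∃ v ∈ s, (s.filter (fun w => G.Adj v w)).card < Δ
  · obtain ⟨v, hv, hvdeg⟩ := h1
    exact exists_coloring_pendant s hv hconn hdegS hvdeg
  push_neg at h1
  have hreg : ∀ u ∈ s, (s.filter (fun w => G.Adj u w)).card = Δ := fun u hu =>
    le_antisymm (hdegS u hu) (h1 u hu)
  have hclosed : ∀ u ∈ s, ∀ w, G.Adj u w → w ∈ s := by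
    intro u hu w hw
    have hsub : s.filter (fun w => G.Adj u w) ⊆ G.neighborFinset u := by
      intro q hq
      rw [Finset.mem_filter] at hq
      exact (G.mem_neighborFinset u q).mpr hq.2
    have heq : s.filter (fun w => G.Adj u w) = G.neighborFinset u :=
      Finset.eq_of_subset_of_card_le hsub (by rw [hreg u hu]; exact hdegAll u hu)
    have : w ∈ G.neighborFinset u := (G.mem_neighborFinset u w).mpr hw
    rw [← heq, Finset.mem_filter] at this
    exact this.1
  by_cases h2 : ∃ c ∈ s, ¬ ConnOn G (↑s \ {c})
  · obtain ⟨c, hc, hcut⟩ := h2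
    exact exists_coloring_cutvertex s (by omega) hc hconn hdegS hcut
  push_neg at h2
  by_cases h3 : s.card ≤ Δ
  · exact exists_coloring_small s h3
  -- now the 2-connected regular case
  have hnc : ∀ v ∈ s, ∃ a b, G.Adj v a ∧ G.Adj v b ∧ ¬ G.Adj a b ∧ a ≠ b := by
    intro v hv
    by_contra hcon
    push_neg at hcon
    refine hclq (insert v (s.filter (fun w => G.Adj v w))) ⟨?_, ?_⟩
    · intro x hx y hy hxy
      rw [Finset.coe_insert, Set.mem_insert_iff, Finset.mem_coe, Finset.mem_filter] at hx hy
      rcases hx with rfl | ⟨hxs, hxadj⟩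
      · rcases hy with rfl | ⟨hys, hyadj⟩
        · exact absurd rfl hxy
        · exact hyadj
      · rcases hy with rfl | ⟨hys, hyadj⟩
        · exact hxadj.symm
        · by_contra hnadj
          exact hxy (hcon x y hxadj hyadj hnadj)
    · rw [Finset.card_insert_of_notMem (by
        intro hmem
        rw [Finset.mem_filter] at hmem
        exact G.irrefl hmem.2), hreg v hv]
  have hdeg3 : ∀ u ∈ s, 3 ≤ (s.filter (fun w => G.Adj u w)).card := by
    intro u hu
    rw [hreg u hu]
    exact hΔ
  have hs : s.Nonempty := by
    rw [← Finset.card_pos]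
    omega
  obtain ⟨v, a, b, hvs, has, hbs, hadja, hadjb, hab, hne, hconn'⟩ :=
    exists_triple s hconn h2 hclosed hdeg3 hnc hs
  exact exists_coloring_triple s (by omega) hadja hadjb hab hne hvs has hbs hconn' hdegS

end BrooksAux

open BrooksAux in
/-- Brooks' theorem, finite case. -/
theorem brooks_finite {V : Type*} [Fintype V] (G : SimpleGraph V) {Δ : ℕ} (hΔ : 3 ≤ Δ)
    (hdeg : ∀ v : V, (G.neighborSet v).ncard ≤ Δ)
    (hclique : G.CliqueFree (Δ + 1)) :
    G.Colorable Δ := by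
  classical
  have hdeg' : ∀ u : V, (G.neighborFinset u).card ≤ Δ := by
    intro u
    have : (G.neighborSet u).ncard = (G.neighborFinset u).card := by
      rw [SimpleGraph.neighborFinset_def, Set.ncard_eq_toFinset_card']
    rw [← this]
    exact hdeg u
  -- color each connected component of `univ`
  have hGood : ∀ x : V, ∃ C : V → ℕ,
      (∀ u ∈ CompOf G Set.univ x, ∀ w ∈ CompOf G Set.univ x, G.Adj u w → C u ≠ C w) ∧
      ∀ u ∈ CompOf G Set.univ x, C u < Δ := by
    intro x
    set t : Finset V := (CompOf G Set.univ x).toFinite.toFinset with ht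
    have htc : (↑t : Set V) = CompOf G Set.univ x := (CompOf G Set.univ x).toFinite.coe_toFinset
    have hconn : ConnOn G ↑t := by
      rw [htc]
      exact CompOf.connOn
    obtain ⟨C, h1, h2⟩ := exists_coloring_conn t hΔ hconn (fun u _ => hdeg' u) hclique
    refine ⟨C, ?_, ?_⟩
    · intro u hu w hw hadj
      exact h1 u ((CompOf G Set.univ x).toFinite.mem_toFinset.mpr hu)
        w ((CompOf G Set.univ x).toFinite.mem_toFinset.mpr hw) hadj
    · intro u hu
      exact h2 u ((CompOf G Set.univ x).toFinite.mem_toFinset.mpr hu)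
  set F : Set V → (V → ℕ) := fun t =>
    if h : ∃ C : V → ℕ, (∀ u ∈ t, ∀ w ∈ t, G.Adj u w → C u ≠ C w) ∧ ∀ u ∈ t, C u < Δ
    then h.choose else fun _ => 0 with hF
  have hFspec : ∀ x : V,
      (∀ u ∈ CompOf G Set.univ x, ∀ w ∈ CompOf G Set.univ x, G.Adj u w →
        F (CompOf G Set.univ x) u ≠ F (CompOf G Set.univ x) w) ∧
      ∀ u ∈ CompOf G Set.univ x, F (CompOf G Set.univ x) u < Δ := by
    intro x
    rw [hF]
    simp only [dif_pos (hGood x)]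
    exact (hGood x).choose_spec
  rw [SimpleGraph.colorable_iff_exists_bdd_nat_coloring]
  refine ⟨SimpleGraph.Coloring.mk (fun x => F (CompOf G Set.univ x) x) ?_, ?_⟩
  · intro u w hadj
    show F (CompOf G Set.univ u) u ≠ F (CompOf G Set.univ w) w
    have huw : CompOf G Set.univ u = CompOf G Set.univ w := by
      have : w ∈ CompOf G Set.univ u :=
        CompOf.adj_closed (CompOf.self_mem (Set.mem_univ u)) hadj (Set.mem_univ w)
      exact (CompOf.eq_of_mem this).symm
    rw [← huw]
    exact (hFspec u).1 u (CompOf.self_mem (Set.mem_univ u))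
      w (huw ▸ CompOf.self_mem (Set.mem_univ w)) hadj
  · intro v
    exact (hFspec v).2 v (CompOf.self_mem (Set.mem_univ v))

/-- Brooks' theorem, clique-free case: a graph with all degrees at most `Δ ≥ 3` and no
`K_{Δ+1}` subgraph is `Δ`-colorable. -/
theorem brooks_clique_free {V : Type*} (G : SimpleGraph V) (Δ : ℕ) (hΔ : 3 ≤ Δ)
    (hfin : ∀ v : V, (G.neighborSet v).Finite)
    (hdeg : ∀ v : V, (G.neighborSet v).ncard ≤ Δ)
    (hclique : G.CliqueFree (Δ + 1)) :
    G.Colorable Δ := by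
  classical
  have key : ∀ G' : G.Subgraph, G'.verts.Finite → G'.coe →g (⊤ : SimpleGraph (Fin Δ)) := by
    intro G' hfinverts
    haveI : Fintype ↥G'.verts := hfinverts.fintype
    have hdeg' : ∀ v : ↥G'.verts, (G'.coe.neighborSet v).ncard ≤ Δ := by
      intro v
      have himg : Subtype.val '' (G'.coe.neighborSet v) ⊆ G.neighborSet ↑v := by
        rintro _ ⟨w, hw, rfl⟩
        exact G'.adj_sub ((G'.coe_adj v w) ▸ hw)
      calc (G'.coe.neighborSet v).ncard
          = (Subtype.val '' (G'.coe.neighborSet v)).ncard :=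
            (Set.ncard_image_of_injective _ Subtype.val_injective).symm
        _ ≤ (G.neighborSet ↑v).ncard := Set.ncard_le_ncard himg (hfin ↑v)
        _ ≤ Δ := hdeg ↑v
    have hclq' : G'.coe.CliqueFree (Δ + 1) := by
      intro t ht
      refine hclique (t.map ⟨Subtype.val, Subtype.val_injective⟩) ⟨?_, ?_⟩
      · intro x hx y hy hxy
        rw [Finset.coe_map, Set.mem_image] at hx hy
        obtain ⟨x', hx', rfl⟩ := hx
        obtain ⟨y', hy', rfl⟩ := hy
        have hne : x' ≠ y' := fun h => hxy (h ▸ rfl)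
        have := ht.1 (Finset.mem_coe.mpr hx') (Finset.mem_coe.mpr hy') hne
        exact G'.adj_sub ((G'.coe_adj x' y') ▸ this)
      · rw [Finset.card_map]
        exact ht.2
    have hcol := brooks_finite G'.coe hΔ hdeg' hclq'
    exact hcol.some
  obtain ⟨f⟩ := SimpleGraph.nonempty_hom_of_forall_finite_subgraph_hom key
  exact ⟨f⟩
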